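/- Let (x_n)_{0 ≤ n < 2^m} be a (0,m,2)-net in base 2 with m ≥ 4 and m ≡ 0 (mod 4), and suppose x_0 = γ = (γ^{(1)}, γ^{(2)}) where γ^{(1)} = 2^{−2} + 2^{−4} + ... + 2^{−m/2} and γ^{(2)} = 2^{−(m/2+2)} + 2^{−(m/2+4)} + ... + 2^{−m}. Then for N = 2^m one has (1/N) Δ(γ, (x_n)_{0 ≤ n < 2^m}) ≤ −(1/4) · m / 2^{m+2}, and consequently D*((x_n)_{0 ≤ n < N}) ≥ (1/(16 log 2)) · (log N)/N. -/

import Mathlib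

open Finset

open scoped Classical

/-- The radical inverse function in base `b`: `φ_b(n) = Σ_j n_j b^{-j-1}`. -/
noncomputable def radInv (b n : ℕ) : ℝ :=
  ∑' j : ℕ, ((n / b ^ j % b : ℕ) : ℝ) / (b : ℝ) ^ (j + 1)

/-- The axis-parallel box `[0, y) = ∏_i [0, y_i)`. -/
def box {s : ℕ} (y : Fin s → ℝ) : Set (Fin s → ℝ) :=
  Set.univ.pi fun i => Set.Ico 0 (y i)

/-- The discrepancy function `Δ(y, (x_n)_{n=a}^{a+N-1})`. -/
noncomputable def disc {s : ℕ} (x : ℕ → Fin s → ℝ) (a N : ℕ) (y : Fin s → ℝ) : ℝ :=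
  ∑ n ∈ Finset.Ico a (a + N),
    ((box y).indicator (fun _ => (1 : ℝ)) (x n) - ∏ i, y i)

/-- The star discrepancy of `(x_n)_{n=a}^{a+N-1}`. -/
noncomputable def Dstar {s : ℕ} (x : ℕ → Fin s → ℝ) (a N : ℕ) : ℝ :=
  sSup {v : ℝ | ∃ y : Fin s → ℝ, (∀ i, y i ∈ Set.Ico (0 : ℝ) 1) ∧
    v = |disc x a N y| / (N : ℝ)}

/-- `(x_n)_{0 ≤ n < b^m}` is a `(t,m,s)`-net in base `b`. -/
def IsNet {s : ℕ} (b t m : ℕ) (x : ℕ → Fin s → ℝ) : Prop :=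
  (∀ n < b ^ m, ∀ i, x n i ∈ Set.Ico (0 : ℝ) 1) ∧
  ∀ d a : Fin s → ℕ, (∀ i, a i < b ^ d i) → (∑ i, d i) + t = m →
    ((Finset.range (b ^ m)).filter
      (fun n => ∀ i, x n i ∈ Set.Ico ((a i : ℝ) / b ^ d i) ((a i + 1 : ℝ) / b ^ d i))).card
      = b ^ t

/-- The `j`-th `b`-adic digit (`j ≥ 1`) of a real number `x ∈ [0,1)`. -/
noncomputable def bdigit (b : ℕ) (x : ℝ) (j : ℕ) : ℕ := (⌊x * (b : ℝ) ^ j⌋ % (b : ℤ)).toNat % b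

/-- The `b`-adic absolute valuation `‖x‖_b = b^{-(k+1)}` where the digits
`x_1, …, x_k` vanish and `x_{k+1} ≠ 0`; it is `0` when all digits vanish. -/
noncomputable def bval (b : ℕ) (x : ℝ) : ℝ :=
  if h : ∃ j, 1 ≤ j ∧ bdigit b x j ≠ 0 then
    (1 : ℝ) / (b : ℝ) ^ sInf {j | 1 ≤ j ∧ bdigit b x j ≠ 0}
  else 0

/-- The `b`-adic absolute valuation of a vector, `‖x‖_b = ∏_j ‖x^{(j)}‖_b`. -/
noncomputable def bvalVec {s : ℕ} (b : ℕ) (x : Fin s → ℝ) : ℝ := ∏ i, bval b (x i)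

/-- Digitwise subtraction modulo `b`: `x ⊖ σ`. -/
noncomputable def bsub (b : ℕ) (x σ : ℝ) : ℝ :=
  ∑' j : ℕ, (((bdigit b x (j + 1) + b - bdigit b σ (j + 1)) % b : ℕ) : ℝ) / (b : ℝ) ^ (j + 1)

/-- Digitwise addition modulo `b`: `x ⊕ σ`. -/
noncomputable def badd (b : ℕ) (x σ : ℝ) : ℝ :=
  ∑' j : ℕ, (((bdigit b x (j + 1) + bdigit b σ (j + 1)) % b : ℕ) : ℝ) / (b : ℝ) ^ (j + 1)

/-- A `b^m`-point set in `[0,1)^s` is `d`-admissible in base `b`. -/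
def IsAdmissible {s : ℕ} (b m : ℕ) (d : ℤ) (x : ℕ → Fin s → ℝ) : Prop :=
  ∀ k n : ℕ, k < n → n < b ^ m →
    bvalVec b (fun i => bsub b (x n i) (x k i)) > (b : ℝ) ^ (-((m : ℤ) + d))

/-- The two-dimensional Halton sequence in bases `2` and `3`. -/
noncomputable def H23 : ℕ → Fin 2 → ℝ := fun n => ![radInv 2 n, radInv 3 n]

/-- `ytil` is the quantity `ỹ_m` for the Halton sequence in bases `2` and `3`
(so that `τ₁ = 2`, `τ₂ = 1`). -/
def IsYtilde (m ytil : ℕ) : Prop :=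
  ytil < 2 ^ (2 * (m + 1)) * 3 ^ (m + 1) ∧
  ∃ M₁ M₂ : ℤ,
    M₁ * 3 ^ (m + 1) ≡ 1 [ZMOD (2 : ℤ) ^ (2 * (m + 1))] ∧
    M₂ * 2 ^ (2 * (m + 1)) ≡ 1 [ZMOD (3 : ℤ) ^ (m + 1)] ∧
    (ytil : ℤ) ≡ M₁ * 3 ^ (m + 1) * (∑ j ∈ Finset.Icc 1 (m + 1), (2 : ℤ) ^ (2 * j - 1))
        + M₂ * 2 ^ (2 * (m + 1)) * (∑ j ∈ Finset.Icc 1 (m + 1), (3 : ℤ) ^ (j - 1))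
      [ZMOD (2 : ℤ) ^ (2 * (m + 1)) * 3 ^ (m + 1)]

-- appended lemmas
lemma indSum (f : ℕ → ℝ) (hf : Monotone f) (q : ℕ) (t : ℝ) :
    ∑ j ∈ Finset.Icc 1 q, (Set.Ico (f (j-1)) (f j)).indicator (fun _ => (1:ℝ)) t
      = (Set.Ico (f 0) (f q)).indicator (fun _ => (1:ℝ)) t := by
  induction q with
  | zero => simp
  | succ q ih =>
      rw [Finset.sum_Icc_succ_top (by omega), ih]
      have h1 : f 0 ≤ f q := hf (by omega)
      have h2 : f q ≤ f (q+1) := hf (by omega)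
      simp only [Set.indicator_apply, Set.mem_Ico, Nat.add_sub_cancel]
      split_ifs <;> simp_all <;> linarith
lemma netCount (m : ℕ) (x : ℕ → Fin 2 → ℝ) (hnet : IsNet 2 0 m x) :
    ∀ e d₁ d₂ a₁ a₂ : ℕ, a₁ < 2^d₁ → a₂ < 2^d₂ → d₁ + d₂ + e = m →
      ((Finset.range (2^m)).filter
        (fun n => x n 0 ∈ Set.Ico ((a₁:ℝ)/2^d₁) ((a₁+1:ℝ)/2^d₁) ∧
                  x n 1 ∈ Set.Ico ((a₂:ℝ)/2^d₂) ((a₂+1:ℝ)/2^d₂))).card = 2^e := by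
  intro e
  induction e with
  | zero =>
      intro d₁ d₂ a₁ a₂ h1 h2 hd
      have := hnet.2 ![d₁, d₂] ![a₁, a₂]
        (by intro i; fin_cases i <;> simpa)
        (by simpa [Fin.sum_univ_two] using hd)
      simp only [Fin.forall_fin_two] at this
      simpa using this
  | succ e ih =>
      intro d₁ d₂ a₁ a₂ h1 h2 hd
      have hc : (0:ℝ) < 2^(d₂+1) := by positivity
      have key : ∀ t : ℝ, t ∈ Set.Ico ((a₂:ℝ)/2^d₂) ((a₂+1:ℝ)/2^d₂) ↔
          (t ∈ Set.Ico (((2*a₂ : ℕ):ℝ)/2^(d₂+1)) (((2*a₂:ℕ)+1:ℝ)/2^(d₂+1)) ∨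
           t ∈ Set.Ico (((2*a₂+1 : ℕ):ℝ)/2^(d₂+1)) (((2*a₂+1:ℕ)+1:ℝ)/2^(d₂+1))) := by
        intro t
        have e1 : ((a₂:ℝ))/2^d₂ = ((2*a₂ : ℕ):ℝ)/2^(d₂+1) := by
          push_cast; rw [pow_succ]; ring
        have e2 : ((a₂:ℝ)+1)/2^d₂ = (((2*a₂+1 : ℕ):ℝ)+1)/2^(d₂+1) := by
          push_cast; rw [pow_succ]; field_simp; ring
        have e3 : (((2*a₂:ℕ):ℝ)+1)/2^(d₂+1) = (((2*a₂+1 : ℕ)):ℝ)/2^(d₂+1) := by push_cast; ring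
        have h12 : ((2*a₂ : ℕ):ℝ)/2^(d₂+1) < (((2*a₂:ℕ):ℝ)+1)/2^(d₂+1) :=
          by apply div_lt_div_of_pos_right (by linarith) hc
        have h23 : (((2*a₂+1 : ℕ)):ℝ)/2^(d₂+1) < ((((2*a₂+1:ℕ)):ℝ)+1)/2^(d₂+1) :=
          by apply div_lt_div_of_pos_right (by linarith) hc
        simp only [Set.mem_Ico]
        rw [e1, e2]
        constructor
        · rintro ⟨hl, hr⟩
          by_cases hm : t < (((2*a₂:ℕ):ℝ)+1)/2^(d₂+1)
          · exact Or.inl ⟨hl, hm⟩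
          · exact Or.inr ⟨by rw [← e3]; linarith, hr⟩
        · rintro (⟨hl, hr⟩ | ⟨hl, hr⟩)
          · exact ⟨hl, by rw [e3] at hr; linarith⟩
          · exact ⟨by rw [← e3] at hl; linarith, hr⟩
      have hsplit : (Finset.range (2^m)).filter
          (fun n => x n 0 ∈ Set.Ico ((a₁:ℝ)/2^d₁) ((a₁+1:ℝ)/2^d₁) ∧
                    x n 1 ∈ Set.Ico ((a₂:ℝ)/2^d₂) ((a₂+1:ℝ)/2^d₂))
        = ((Finset.range (2^m)).filter
          (fun n => x n 0 ∈ Set.Ico ((a₁:ℝ)/2^d₁) ((a₁+1:ℝ)/2^d₁) ∧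
                    x n 1 ∈ Set.Ico (((2*a₂:ℕ):ℝ)/2^(d₂+1)) (((2*a₂:ℕ)+1:ℝ)/2^(d₂+1)))) ∪
          ((Finset.range (2^m)).filter
          (fun n => x n 0 ∈ Set.Ico ((a₁:ℝ)/2^d₁) ((a₁+1:ℝ)/2^d₁) ∧
                    x n 1 ∈ Set.Ico (((2*a₂+1:ℕ):ℝ)/2^(d₂+1)) (((2*a₂+1:ℕ)+1:ℝ)/2^(d₂+1)))) := by
        rw [← Finset.filter_or]
        apply Finset.filter_congr
        intro n _
        rw [key (x n 1)]
        tauto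
      have hdisj : Disjoint
          ((Finset.range (2^m)).filter
          (fun n => x n 0 ∈ Set.Ico ((a₁:ℝ)/2^d₁) ((a₁+1:ℝ)/2^d₁) ∧
                    x n 1 ∈ Set.Ico (((2*a₂:ℕ):ℝ)/2^(d₂+1)) (((2*a₂:ℕ)+1:ℝ)/2^(d₂+1))))
          ((Finset.range (2^m)).filter
          (fun n => x n 0 ∈ Set.Ico ((a₁:ℝ)/2^d₁) ((a₁+1:ℝ)/2^d₁) ∧
                    x n 1 ∈ Set.Ico (((2*a₂+1:ℕ):ℝ)/2^(d₂+1)) (((2*a₂+1:ℕ)+1:ℝ)/2^(d₂+1)))) := by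
        rw [Finset.disjoint_left]
        intro n hn1 hn2
        simp only [Finset.mem_filter, Set.mem_Ico] at hn1 hn2
        have := hn1.2.2.2
        have := hn2.2.2.1
        push_cast at *
        linarith
      rw [hsplit, Finset.card_union_of_disjoint hdisj,
        ih d₁ (d₂+1) a₁ (2*a₂) h1 (by rw [pow_succ]; omega) (by omega),
        ih d₁ (d₂+1) a₁ (2*a₂+1) h1 (by rw [pow_succ]; omega) (by omega)]
      ring
noncomputable def gg (j : ℕ) : ℝ := (1 - (1/4 : ℝ)^j) / 3

lemma gg_sum (q : ℕ) : ∑ i ∈ Finset.Icc 1 q, ((1:ℝ)/2)^(2*i) = gg q := by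
  induction q with
  | zero => simp [gg]
  | succ q ih =>
      rw [Finset.sum_Icc_succ_top (by omega), ih]
      simp only [gg, pow_succ, pow_mul]
      ring

lemma gg_nonneg (j : ℕ) : 0 ≤ gg j := by
  have : (1/4:ℝ)^j ≤ 1 := pow_le_one₀ (by norm_num) (by norm_num)
  unfold gg; linarith

lemma gg_mono {a b : ℕ} (h : a ≤ b) : gg a ≤ gg b := by
  have : (1/4:ℝ)^b ≤ (1/4:ℝ)^a := pow_le_pow_of_le_one (by norm_num) (by norm_num) h
  unfold gg; linarith

lemma gg_lt (a b : ℕ) : gg b - gg a ≤ (1/4:ℝ)^a / 3 := by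
  have : 0 ≤ (1/4:ℝ)^b := by positivity
  unfold gg; linarith

lemma gg_succ (j : ℕ) : gg (j+1) = gg j + (1/4:ℝ)^(j+1) := by
  simp only [gg, pow_succ]; ring

lemma gg_le_third (j : ℕ) : gg j ≤ 1/3 := by
  have : 0 ≤ (1/4:ℝ)^j := by positivity
  unfold gg; linarith

/-- nat numerator of gg -/
def lev : ℕ → ℕ
  | 0 => 0
  | (j+1) => 4 * lev j + 1

lemma lev_lt (j : ℕ) : lev j < 4^j := by
  induction j with
  | zero => simp [lev]
  | succ j ih => simp only [lev, pow_succ]; omega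

lemma lev_cast (j : ℕ) : (lev j : ℝ) = 4^j * gg j := by
  induction j with
  | zero => simp [lev, gg]
  | succ j ih =>
      have h4 : (1/4:ℝ)^j * 4^j = 1 := by rw [← mul_pow]; norm_num
      simp only [lev, gg_succ, Nat.cast_add, Nat.cast_mul, Nat.cast_ofNat, ih, pow_succ]
      nlinarith [h4]
lemma two_pow_eq (a b : ℕ) : (2:ℝ)^(2*a+2*b+1) = 2 * 4^a * 4^b := by
  rw [pow_add, pow_add, pow_mul, pow_mul]; norm_num; ring

lemma half_pow_eq (a b : ℕ) : ((1:ℝ)/2)^(2*a+2*b+1) = (1/4:ℝ)^a * (1/4:ℝ)^b / 2 := by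
  rw [pow_add, pow_add, pow_mul, pow_mul]; norm_num; ring

lemma levCval (q : ℕ) (hq : 1 ≤ q) (x : ℕ → Fin 2 → ℝ) (hnet : IsNet 2 0 (4*q) x)
    (hx1 : x 0 0 = gg q) (hx2 : x 0 1 = (1/4:ℝ)^q * gg q)
    (j k : ℕ) (hj1 : 1 ≤ j) (hj2 : j ≤ q) (hk1 : 1 ≤ k) (hk2 : k ≤ q) :
    ((Finset.range (2^(4*q))).filter
      (fun n => x n 0 ∈ Set.Ico (gg (j-1)) (gg j) ∧
                x n 1 ∈ Set.Ico ((1/4:ℝ)^q * gg (k-1)) ((1/4:ℝ)^q * gg k))).card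
      = if j + k ≤ q then 2^(4*q - (2*j+2*q+2*k)) else 0 := by
  obtain ⟨j', rfl⟩ : ∃ j', j = j' + 1 := ⟨j - 1, by omega⟩
  obtain ⟨k', rfl⟩ : ∃ k', k = k' + 1 := ⟨k - 1, by omega⟩
  have hlev1 : ∀ i : ℕ, 1 ≤ lev (i+1) := by intro i; simp [lev]
  have hlevm1 : ∀ i : ℕ, (lev (i+1) - 1 : ℕ) = 4 * lev i := by intro i; simp [lev]
  have h4eq : ∀ i : ℕ, (2:ℝ)^(2*i) = 4^i := by intro i; rw [pow_mul]; norm_num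
  have h4eqN : ∀ i : ℕ, (2:ℕ)^(2*i) = 4^i := by intro i; rw [pow_mul]; norm_num
  have hlevlt : ∀ i : ℕ, (lev (i+1) - 1 : ℕ) < 2^(2*(i+1)) := by
    intro i
    have h1 := lev_lt (i+1)
    have h2 := h4eqN (i+1)
    omega
  have hend1 : ∀ i : ℕ, ((lev (i+1) - 1 : ℕ) : ℝ) / 2^(2*(i+1)) = gg i := by
    intro i
    rw [hlevm1 i]
    push_cast
    rw [lev_cast, h4eq (i+1), pow_succ]
    field_simp
  have hend2 : ∀ i : ℕ, (((lev (i+1) - 1 : ℕ) : ℝ) + 1) / 2^(2*(i+1)) = gg (i+1) := by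
    intro i
    have h1 : ((lev (i+1) - 1 : ℕ) : ℝ) + 1 = ((lev (i+1) : ℕ) : ℝ) := by
      have := hlev1 i; push_cast [this]; ring
    rw [h1, lev_cast, h4eq (i+1)]
    field_simp
  have hoff : ∀ (d a : ℕ), ((a:ℝ))/2^(2*q+d) = (1/4:ℝ)^q * ((a:ℝ)/2^d) := by
    intro d a
    rw [pow_add, h4eq q, show ((1:ℝ)/4)^q = ((4:ℝ)^q)⁻¹ by rw [div_pow, one_pow, one_div]]
    field_simp
  by_cases hcase : j' + 1 + (k' + 1) ≤ q
  · rw [if_pos hcase]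
    have hd : 2*(j'+1) + (2*q + 2*(k'+1)) + (4*q - (2*(j'+1)+2*q+2*(k'+1))) = 4*q := by omega
    have hb2 : (lev (k'+1) - 1 : ℕ) < 2^(2*q+2*(k'+1)) := by
      have h1 := hlevlt k'
      have h2 : (2:ℕ)^(2*(k'+1)) ≤ 2^(2*q+2*(k'+1)) := Nat.pow_le_pow_right (by norm_num) (by omega)
      omega
    have hcnt := netCount (4*q) x hnet (4*q - (2*(j'+1)+2*q+2*(k'+1)))
      (2*(j'+1)) (2*q+2*(k'+1)) (lev (j'+1) - 1) (lev (k'+1) - 1) (hlevlt j') hb2 hd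
    rw [← hcnt]
    apply Finset.card_nbij id (fun n hn => ?_) (fun n hn => ?_)
    all_goals {
      simp only [Finset.coe_filter, Set.mem_setOf_eq, Finset.mem_range, Set.mem_Ico,
        Nat.add_sub_cancel, id] at *
      have e1 := hend1 j'
      have e2 := hend2 j'
      have e3 : ((lev (k'+1) - 1 : ℕ):ℝ) / 2^(2*q+2*(k'+1)) = (1/4:ℝ)^q * gg k' := by
        rw [hoff (2*(k'+1)) (lev (k'+1) - 1), hend1 k']
      have e4 : (((lev (k'+1) - 1 : ℕ):ℝ) + 1) / 2^(2*q+2*(k'+1)) = (1/4:ℝ)^q * gg (k'+1) := by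
        have h1 : ((lev (k'+1) - 1 : ℕ) : ℝ) + 1 = ((lev (k'+1) : ℕ) : ℝ) := by
          have := hlev1 k'; push_cast [this]; ring
        rw [h1, hoff (2*(k'+1)) (lev (k'+1)), lev_cast, h4eq (k'+1)]
        congr 1
        field_simp
      rw [e1, e2, e3, e4] at *
      tauto
    }
  · rw [if_neg hcase]
    rw [Finset.card_eq_zero, Finset.eq_empty_iff_forall_notMem]
    intro n hn
    simp only [Finset.mem_filter, Finset.mem_range, Set.mem_Ico, Nat.add_sub_cancel] at hn
    obtain ⟨hnr, ⟨hn1l, hn1r⟩, hn2l, hn2r⟩ := hn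
    set u : ℕ := q - (j' + 1) with hu
    have huk : u ≤ k' := by omega
    have hb1 : (2 * lev j' : ℕ) < 2^(2*j'+1) := by
      have h1 := lev_lt j'
      have h2 := h4eqN j'
      have h3 : (2:ℕ)^(2*j'+1) = 2 * 2^(2*j') := by rw [pow_succ]; ring
      omega
    have hb2 : (2 * lev u : ℕ) < 2^(2*q+2*u+1) := by
      have h1 := lev_lt u
      have h2 := h4eqN u
      have h3 : (2:ℕ)^(2*u) ≤ 2^(2*q+2*u) := Nat.pow_le_pow_right (by norm_num) (by omega)
      have h4 : (2:ℕ)^(2*q+2*u+1) = 2 * 2^(2*q+2*u) := by rw [pow_succ]; ring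
      omega
    have hdsum : (2*j'+1) + (2*q+2*u+1) + 0 = 4*q := by omega
    have hcard := netCount (4*q) x hnet 0 (2*j'+1) (2*q+2*u+1) (2*lev j') (2*lev u) hb1 hb2 hdsum
    have E1 : ((2 * lev j' : ℕ):ℝ) / 2^(2*j'+1) = gg j' := by
      push_cast
      rw [lev_cast, show (2:ℝ)^(2*j'+1) = 2 * 4^j'  by rw [pow_succ, h4eq j']; ring]
      field_simp
    have E2 : (((2 * lev j' : ℕ):ℝ) + 1) / 2^(2*j'+1) = gg j' + (1/4:ℝ)^j' / 2 := by
      push_cast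
      rw [lev_cast, show (2:ℝ)^(2*j'+1) = 2 * 4^j'  by rw [pow_succ, h4eq j']; ring,
        show ((1:ℝ)/4)^j' = ((4:ℝ)^j')⁻¹ by rw [div_pow, one_pow, one_div]]
      field_simp
    have E3 : ((2 * lev u : ℕ):ℝ) / 2^(2*q+2*u+1) = (1/4:ℝ)^q * gg u := by
      push_cast
      rw [lev_cast, two_pow_eq q u,
        show ((1:ℝ)/4)^q = ((4:ℝ)^q)⁻¹ by rw [div_pow, one_pow, one_div]]
      field_simp
    have E4 : (((2 * lev u : ℕ):ℝ) + 1) / 2^(2*q+2*u+1)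
        = (1/4:ℝ)^q * gg u + (1/4:ℝ)^q * (1/4:ℝ)^u / 2 := by
      push_cast
      rw [lev_cast, two_pow_eq q u,
        show ((1:ℝ)/4)^q = ((4:ℝ)^q)⁻¹ by rw [div_pow, one_pow, one_div],
        show ((1:ℝ)/4)^u = ((4:ℝ)^u)⁻¹ by rw [div_pow, one_pow, one_div]]
      field_simp
    have h0q : (0:ℝ) < (1/4:ℝ)^q := by positivity
    have h0j : (0:ℝ) < (1/4:ℝ)^j' := by positivity
    have h0u : (0:ℝ) < (1/4:ℝ)^u := by positivity
    have hmem : ∀ w : ℕ, w < 2^(4*q) →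
        gg j' ≤ x w 0 → x w 0 < gg j' + (1/4:ℝ)^j'/2 →
        (1/4:ℝ)^q * gg u ≤ x w 1 → x w 1 < (1/4:ℝ)^q * gg u + (1/4:ℝ)^q * (1/4:ℝ)^u / 2 →
        w ∈ (Finset.range (2^(4*q))).filter
          (fun n => x n 0 ∈ Set.Ico (((2*lev j' : ℕ):ℝ)/2^(2*j'+1)) ((((2*lev j' : ℕ):ℝ)+1)/2^(2*j'+1)) ∧
            x n 1 ∈ Set.Ico (((2*lev u : ℕ):ℝ)/2^(2*q+2*u+1)) ((((2*lev u : ℕ):ℝ)+1)/2^(2*q+2*u+1))) := by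
      intro w hw c1 c2 c3 c4
      simp only [Finset.mem_filter, Finset.mem_range, Set.mem_Ico]
      rw [E1, E2, E3, E4]
      exact ⟨hw, ⟨c1, c2⟩, c3, c4⟩
    have hfac : (1/4:ℝ)^q * gg u + (1/4:ℝ)^q * (1/4:ℝ)^u / 2 = (1/4:ℝ)^q * (gg u + (1/4:ℝ)^u/2) := by
      ring
    have hnmem := hmem n hnr hn1l
      (by have := gg_lt j' (j'+1); linarith)
      (le_trans (mul_le_mul_of_nonneg_left (gg_mono huk) h0q.le) hn2l)
      (by
        rw [hfac]
        exact lt_of_lt_of_le hn2r (mul_le_mul_of_nonneg_left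
          (by have := gg_lt u (k'+1); linarith) h0q.le))
    have h0mem := hmem 0 (by positivity)
      (by rw [hx1]; exact gg_mono (by omega))
      (by rw [hx1]; have := gg_lt j' q; linarith)
      (by rw [hx2]; exact mul_le_mul_of_nonneg_left (gg_mono (by omega)) h0q.le)
      (by
        rw [hx2, hfac]
        exact (mul_lt_mul_iff_right₀ h0q).mpr (by have := gg_lt u q; linarith))
    rw [pow_zero] at hcard
    obtain ⟨a, ha⟩ := Finset.card_eq_one.mp hcard
    rw [ha, Finset.mem_singleton] at hnmem h0mem
    rw [hnmem, ← h0mem, hx2] at hn2r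
    have hle : gg (k'+1) ≤ gg q := gg_mono (by omega)
    have := (mul_lt_mul_iff_right₀ h0q).mp hn2r
    linarith
lemma pow_half_two_mul (n : ℕ) : ((1:ℝ)/2)^(2*n) = (1/4:ℝ)^n := by
  rw [pow_mul]; norm_num

lemma quarter_pow (i : ℕ) : (1/4:ℝ)^i = ((2:ℝ)^(2*i))⁻¹ := by
  rw [pow_mul, ← inv_pow]; norm_num

lemma indProd (γ v : Fin 2 → ℝ) :
    (box γ).indicator (fun _ => (1:ℝ)) v =
      (Set.Ico (0:ℝ) (γ 0)).indicator (fun _ => (1:ℝ)) (v 0) *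
      (Set.Ico (0:ℝ) (γ 1)).indicator (fun _ => (1:ℝ)) (v 1) := by
  have hbox : v ∈ box γ ↔ (∀ i, v i ∈ Set.Ico (0:ℝ) (γ i)) := Set.mem_univ_pi
  rw [Fin.forall_fin_two] at hbox
  by_cases h0 : v 0 ∈ Set.Ico (0:ℝ) (γ 0) <;> by_cases h1 : v 1 ∈ Set.Ico (0:ℝ) (γ 1) <;>
    simp [Set.indicator_apply, hbox, h0, h1]

lemma indMul (a b c d t s : ℝ) :
    (Set.Ico a b).indicator (fun _ => (1:ℝ)) t * (Set.Ico c d).indicator (fun _ => (1:ℝ)) s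
      = if (t ∈ Set.Ico a b ∧ s ∈ Set.Ico c d) then (1:ℝ) else 0 := by
  by_cases h1 : t ∈ Set.Ico a b <;> by_cases h2 : s ∈ Set.Ico c d <;>
    simp [Set.indicator_apply, h1, h2]

noncomputable def Cnt (q N : ℕ) (x : ℕ → Fin 2 → ℝ) (j k : ℕ) : ℕ :=
  ((Finset.range N).filter
    (fun n => x n 0 ∈ Set.Ico (gg (j-1)) (gg j) ∧
              x n 1 ∈ Set.Ico ((1/4:ℝ)^q * gg (k-1)) ((1/4:ℝ)^q * gg k))).card

noncomputable def Wgt (q j k : ℕ) : ℝ := (2:ℝ)^(4*q) * ((1/4:ℝ)^j * ((1/4:ℝ)^q * (1/4:ℝ)^k))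

lemma Wgt_pos (q j k : ℕ) : 0 < Wgt q j k := by unfold Wgt; positivity

lemma countSum (q N : ℕ) (x : ℕ → Fin 2 → ℝ) :
    ∑ n ∈ Finset.range N,
      ((∑ j ∈ Finset.Icc 1 q, (Set.Ico (gg (j-1)) (gg j)).indicator (fun _ => (1:ℝ)) (x n 0)) *
       (∑ k ∈ Finset.Icc 1 q,
         (Set.Ico ((1/4:ℝ)^q * gg (k-1)) ((1/4:ℝ)^q * gg k)).indicator (fun _ => (1:ℝ)) (x n 1)))
    = ∑ j ∈ Finset.Icc 1 q, ∑ k ∈ Finset.Icc 1 q, (Cnt q N x j k : ℝ) := by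
  have h1 : ∀ n, (∑ j ∈ Finset.Icc 1 q, (Set.Ico (gg (j-1)) (gg j)).indicator (fun _ => (1:ℝ)) (x n 0)) *
       (∑ k ∈ Finset.Icc 1 q,
         (Set.Ico ((1/4:ℝ)^q * gg (k-1)) ((1/4:ℝ)^q * gg k)).indicator (fun _ => (1:ℝ)) (x n 1))
      = ∑ j ∈ Finset.Icc 1 q, ∑ k ∈ Finset.Icc 1 q,
          (if (x n 0 ∈ Set.Ico (gg (j-1)) (gg j) ∧
               x n 1 ∈ Set.Ico ((1/4:ℝ)^q * gg (k-1)) ((1/4:ℝ)^q * gg k)) then (1:ℝ) else 0) := by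
    intro n
    rw [Finset.sum_mul_sum]
    exact Finset.sum_congr rfl fun j _ => Finset.sum_congr rfl fun k _ => indMul _ _ _ _ _ _
  rw [Finset.sum_congr rfl fun n _ => h1 n, Finset.sum_comm]
  refine Finset.sum_congr rfl fun j _ => ?_
  rw [Finset.sum_comm]
  refine Finset.sum_congr rfl fun k _ => ?_
  rw [Finset.sum_boole]
  rfl

lemma CntVal (q : ℕ) (hq : 1 ≤ q) (x : ℕ → Fin 2 → ℝ) (hnet : IsNet 2 0 (4*q) x)
    (hx1 : x 0 0 = gg q) (hx2 : x 0 1 = (1/4:ℝ)^q * gg q)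
    (j k : ℕ) (hj1 : 1 ≤ j) (hj2 : j ≤ q) (hk1 : 1 ≤ k) (hk2 : k ≤ q) :
    (Cnt q (2^(4*q)) x j k : ℝ) - Wgt q j k = if j + k ≤ q then 0 else -(Wgt q j k) := by
  have hval : Cnt q (2^(4*q)) x j k = if j + k ≤ q then 2^(4*q - (2*j+2*q+2*k)) else 0 :=
    levCval q hq x hnet hx1 hx2 j k hj1 hj2 hk1 hk2
  rw [hval]
  by_cases hcase : j + k ≤ q
  · rw [if_pos hcase, if_pos hcase]
    have hcast : ((2^(4*q - (2*j+2*q+2*k)) : ℕ) : ℝ) = Wgt q j k := by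
      push_cast
      unfold Wgt
      rw [quarter_pow, quarter_pow, quarter_pow]
      rw [show (2:ℝ)^(4*q) = 2^(4*q - (2*j+2*q+2*k)) * (2^(2*j) * (2^(2*q) * 2^(2*k))) by
        rw [← pow_add, ← pow_add, ← pow_add]; congr 1; omega]
      field_simp
    rw [hcast]; ring
  · rw [if_neg hcase, if_neg hcase]
    push_cast; ring

lemma WgtDiag (q j : ℕ) (hj1 : 1 ≤ j) (hj2 : j ≤ q) : Wgt q j (q+1-j) = 1/4 := by
  unfold Wgt
  rw [quarter_pow, quarter_pow, quarter_pow,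
    show ((2:ℝ)^(2*j))⁻¹ * (((2:ℝ)^(2*q))⁻¹ * ((2:ℝ)^(2*(q+1-j)))⁻¹)
        = ((2:ℝ)^(4*q+2))⁻¹ by
      rw [← mul_inv, ← mul_inv, ← pow_add, ← pow_add]; congr 2; omega,
    show (2:ℝ)^(4*q+2) = 2^(4*q) * 4 by rw [pow_add]; norm_num]
  have h2 : (0:ℝ) < 2^(4*q) := by positivity
  field_simp
theorem levin_net_dim_two (m : ℕ) (hm4 : 4 ≤ m) (hmod : m % 4 = 0)
    (x : ℕ → Fin 2 → ℝ) (hnet : IsNet 2 0 m x)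
    (γ : Fin 2 → ℝ)
    (hγ1 : γ 0 = ∑ j ∈ Finset.Icc 1 (m / 4), ((1 : ℝ) / 2) ^ (2 * j))
    (hγ2 : γ 1 = ∑ j ∈ Finset.Icc 1 (m / 4), ((1 : ℝ) / 2) ^ (m / 2 + 2 * j))
    (hx0 : x 0 = γ) :
    (1 / ((2 : ℝ) ^ m)) * disc x 0 (2 ^ m) γ ≤ -(1 / 4) * (m : ℝ) / (2 : ℝ) ^ (m + 2) ∧
    Dstar x 0 (2 ^ m) ≥ (1 / (16 * Real.log 2)) * Real.log ((2 : ℝ) ^ m) / (2 : ℝ) ^ m := by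
  obtain ⟨q, rfl⟩ : ∃ q, m = 4*q := ⟨m/4, by omega⟩
  have hq1 : 1 ≤ q := by omega
  have hγ0 : γ 0 = gg q := by rw [hγ1, show 4*q/4 = q by omega]; exact gg_sum q
  have hγ1' : γ 1 = (1/4:ℝ)^q * gg q := by
    rw [hγ2, show 4*q/4 = q by omega, show 4*q/2 = 2*q by omega, ← gg_sum q, Finset.mul_sum]
    exact Finset.sum_congr rfl fun i _ => by rw [pow_add, pow_half_two_mul q]
  have hx01 : x 0 0 = gg q := by rw [hx0, hγ0]
  have hx02 : x 0 1 = (1/4:ℝ)^q * gg q := by rw [hx0, hγ1']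
  have hmono1 : Monotone gg := fun a b h => gg_mono h
  have hmono2 : Monotone (fun k => (1/4:ℝ)^q * gg k) := fun a b h =>
    mul_le_mul_of_nonneg_left (gg_mono h) (by positivity)
  have hgg0 : gg 0 = 0 := by norm_num [gg]
  have hsum1 : ∀ t : ℝ, (Set.Ico (0:ℝ) (γ 0)).indicator (fun _ => (1:ℝ)) t
      = ∑ j ∈ Finset.Icc 1 q, (Set.Ico (gg (j-1)) (gg j)).indicator (fun _ => (1:ℝ)) t := by
    intro t
    have h : Set.Ico (0:ℝ) (γ 0) = Set.Ico (gg 0) (gg q) := by rw [hγ0, hgg0]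
    rw [h]
    exact (indSum gg hmono1 q t).symm
  have hsum2 : ∀ t : ℝ, (Set.Ico (0:ℝ) (γ 1)).indicator (fun _ => (1:ℝ)) t
      = ∑ k ∈ Finset.Icc 1 q, (Set.Ico ((1/4:ℝ)^q * gg (k-1)) ((1/4:ℝ)^q * gg k)).indicator
          (fun _ => (1:ℝ)) t := by
    intro t
    have h : Set.Ico (0:ℝ) (γ 1) = Set.Ico ((1/4:ℝ)^q * gg 0) ((1/4:ℝ)^q * gg q) := by
      rw [hγ1', hgg0, mul_zero]
    rw [h]
    exact (indSum (fun k => (1/4:ℝ)^q * gg k) hmono2 q t).symm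
  -- the discrepancy identity
  have hdisc : disc x 0 (2^(4*q)) γ
      = ∑ j ∈ Finset.Icc 1 q, ∑ k ∈ Finset.Icc 1 q, ((Cnt q (2^(4*q)) x j k : ℝ) - Wgt q j k) := by
    unfold disc
    rw [zero_add, ← Finset.range_eq_Ico, Finset.sum_sub_distrib]
    have hA : ∑ n ∈ Finset.range (2^(4*q)), (box γ).indicator (fun _ => (1:ℝ)) (x n)
        = ∑ j ∈ Finset.Icc 1 q, ∑ k ∈ Finset.Icc 1 q, (Cnt q (2^(4*q)) x j k : ℝ) := by
      rw [← countSum q (2^(4*q)) x]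
      exact Finset.sum_congr rfl fun n _ => by rw [indProd γ (x n), hsum1, hsum2]
    have hB : ∑ _n ∈ Finset.range (2^(4*q)), (∏ i, γ i)
        = ∑ j ∈ Finset.Icc 1 q, ∑ k ∈ Finset.Icc 1 q, Wgt q j k := by
      have hγ0s : γ 0 = ∑ j ∈ Finset.Icc 1 q, (1/4:ℝ)^j := by
        rw [hγ0, ← gg_sum q]
        exact Finset.sum_congr rfl fun i _ => pow_half_two_mul i
      have hγ1s : γ 1 = ∑ k ∈ Finset.Icc 1 q, (1/4:ℝ)^q * (1/4:ℝ)^k := by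
        rw [hγ1', ← gg_sum q, Finset.mul_sum]
        exact Finset.sum_congr rfl fun i _ => by rw [pow_half_two_mul i]
      rw [Finset.sum_const, Finset.card_range, Fin.prod_univ_two, hγ0s, hγ1s,
        Finset.sum_mul_sum, nsmul_eq_mul, Finset.mul_sum]
      refine Finset.sum_congr rfl fun j _ => ?_
      rw [Finset.mul_sum]
      refine Finset.sum_congr rfl fun k _ => ?_
      unfold Wgt
      push_cast
      ring
    rw [hA, hB, ← Finset.sum_sub_distrib]
    exact Finset.sum_congr rfl fun j _ => (Finset.sum_sub_distrib _ _).symm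
  -- bound the double sum
  have hbound : disc x 0 (2^(4*q)) γ ≤ -(q:ℝ)/4 := by
    rw [hdisc]
    have hrow : ∀ j ∈ Finset.Icc 1 q,
        ∑ k ∈ Finset.Icc 1 q, ((Cnt q (2^(4*q)) x j k : ℝ) - Wgt q j k) ≤ -(1/4:ℝ) := by
      intro j hj
      simp only [Finset.mem_Icc] at hj
      have hk0 : q + 1 - j ∈ Finset.Icc 1 q := by simp only [Finset.mem_Icc]; omega
      have hval : (Cnt q (2^(4*q)) x j (q+1-j) : ℝ) - Wgt q j (q+1-j) = -(1/4:ℝ) := by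
        rw [CntVal q hq1 x hnet hx01 hx02 j (q+1-j) hj.1 hj.2 (by omega) (by omega),
          if_neg (by omega), WgtDiag q j hj.1 hj.2]
      have hnonpos : ∀ k ∈ Finset.Icc 1 q, (Cnt q (2^(4*q)) x j k : ℝ) - Wgt q j k ≤ 0 := by
        intro k hk
        simp only [Finset.mem_Icc] at hk
        rw [CntVal q hq1 x hnet hx01 hx02 j k hj.1 hj.2 hk.1 hk.2]
        split_ifs
        · exact le_refl 0
        · linarith [Wgt_pos q j k]
      rw [← Finset.add_sum_erase _ _ hk0]
      have h2 : ∑ k ∈ (Finset.Icc 1 q).erase (q+1-j), ((Cnt q (2^(4*q)) x j k : ℝ) - Wgt q j k) ≤ 0 :=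
        Finset.sum_nonpos fun k hk => hnonpos k (Finset.mem_of_mem_erase hk)
      linarith
    calc ∑ j ∈ Finset.Icc 1 q, ∑ k ∈ Finset.Icc 1 q, ((Cnt q (2^(4*q)) x j k : ℝ) - Wgt q j k)
        ≤ ∑ _j ∈ Finset.Icc 1 q, -(1/4:ℝ) := Finset.sum_le_sum hrow
      _ = -(q:ℝ)/4 := by
          rw [Finset.sum_const, Nat.card_Icc, nsmul_eq_mul]
          push_cast
          ring
  have hp : (0:ℝ) < 2^(4*q) := by positivity
  constructor
  · have h1 : (1 / ((2:ℝ)^(4*q))) * disc x 0 (2^(4*q)) γ ≤ (1 / ((2:ℝ)^(4*q))) * (-(q:ℝ)/4) :=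
      mul_le_mul_of_nonneg_left hbound (by positivity)
    refine h1.trans (le_of_eq ?_)
    push_cast
    rw [pow_add]
    field_simp
    ring
  · have habs : ∀ y : Fin 2 → ℝ, (∀ i, y i ∈ Set.Ico (0 : ℝ) 1) →
        |disc x 0 (2^(4*q)) y| ≤ ((2^(4*q) : ℕ) : ℝ) := by
      intro y hy
      unfold disc
      calc |∑ n ∈ Finset.Ico 0 (0 + 2^(4*q)), ((box y).indicator (fun _ => (1:ℝ)) (x n) - ∏ i, y i)|
          ≤ ∑ n ∈ Finset.Ico 0 (0 + 2^(4*q)),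
              |((box y).indicator (fun _ => (1:ℝ)) (x n) - ∏ i, y i)| :=
            Finset.abs_sum_le_sum_abs _ _
        _ ≤ ∑ _n ∈ Finset.Ico 0 (0 + 2^(4*q)), (1:ℝ) := by
            refine Finset.sum_le_sum fun n _ => ?_
            have hind : (box y).indicator (fun _ => (1:ℝ)) (x n) = 0 ∨
                (box y).indicator (fun _ => (1:ℝ)) (x n) = 1 := by
              by_cases hmem : x n ∈ box y
              · right; rw [Set.indicator_of_mem hmem]
              · left; rw [Set.indicator_of_notMem hmem]
            have hprod0 : 0 ≤ ∏ i, y i := Finset.prod_nonneg fun i _ => (hy i).1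
            have hprod1 : ∏ i, y i ≤ 1 :=
              Finset.prod_le_one (fun i _ => (hy i).1) (fun i _ => le_of_lt (hy i).2)
            rcases hind with h|h <;> rw [h, abs_le] <;> constructor <;> linarith
        _ = ((2^(4*q):ℕ):ℝ) := by
            rw [Finset.sum_const, zero_add, Nat.card_Ico, nsmul_eq_mul, mul_one]
            norm_cast
    have hcast : ((2^(4*q) : ℕ) : ℝ) = (2:ℝ)^(4*q) := by norm_cast
    have hBdd : BddAbove {v : ℝ | ∃ y : Fin 2 → ℝ, (∀ i, y i ∈ Set.Ico (0 : ℝ) 1) ∧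
        v = |disc x 0 (2^(4*q)) y| / ((2^(4*q) : ℕ) : ℝ)} := by
      refine ⟨1, ?_⟩
      rintro v ⟨y, hy, rfl⟩
      rw [div_le_one (by rw [hcast]; positivity)]
      exact habs y hy
    have hγmem : ∀ i : Fin 2, γ i ∈ Set.Ico (0:ℝ) 1 := by
      have hth := gg_le_third q
      have hnn := gg_nonneg q
      have h1 : (0:ℝ) ≤ (1/4:ℝ)^q := by positivity
      have h2 : (1/4:ℝ)^q ≤ 1 := pow_le_one₀ (by norm_num) (by norm_num)
      refine Fin.forall_fin_two.mpr ⟨?_, ?_⟩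
      · exact ⟨by rw [hγ0]; exact hnn, by rw [hγ0]; linarith⟩
      · refine ⟨by rw [hγ1']; positivity, ?_⟩
        rw [hγ1']
        nlinarith
    have hin : |disc x 0 (2^(4*q)) γ| / ((2^(4*q) : ℕ) : ℝ) ∈ {v : ℝ | ∃ y : Fin 2 → ℝ,
        (∀ i, y i ∈ Set.Ico (0 : ℝ) 1) ∧ v = |disc x 0 (2^(4*q)) y| / ((2^(4*q) : ℕ) : ℝ)} :=
      ⟨γ, hγmem, rfl⟩
    have hle := le_csSup hBdd hin
    rw [ge_iff_le]
    unfold Dstar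
    refine le_trans ?_ hle
    have habsγ : (q:ℝ)/4 ≤ |disc x 0 (2^(4*q)) γ| := by
      have h := neg_le_abs (disc x 0 (2^(4*q)) γ)
      linarith
    have htv : (1 / (16 * Real.log 2)) * Real.log ((2:ℝ)^(4*q)) / (2:ℝ)^(4*q)
        = ((q:ℝ)/4) / (2:ℝ)^(4*q) := by
      rw [Real.log_pow]
      have hl2 : Real.log 2 ≠ 0 := ne_of_gt (Real.log_pos (by norm_num))
      push_cast
      field_simp
      ring
    rw [htv, hcast]
    exact (div_le_div_iff_of_pos_right hp).mpr habsγ
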